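/- Let the value functions before and after one stochastic gradient update satisfy ‖Q - Q₀‖_∞ ≤ 4αL(k+1)/B, where Q - Q' ∈ H¹(0,1) for two runs with neighboring rewards, and Q - Q' is L-Lipschitz. Then with β = B/(4α(k+1)), the RKHS norm in the Sobolev space H¹ with kernel exp(-β|x-y|) satisfies ‖Q - Q'‖²_H ≤ ((4α(k+1)/B)² + 4α(k+1)/B)·L². -/

import Mathlib

open MeasureTheory intervalIntegral

theorem stmt18 (α L k B : ℝ) (hα : 0 < α) (hL : 0 ≤ L) (hk : 0 < k) (hB : 0 < B)
    (β : ℝ) (hβ : β = B / (4 * α * (k + 1)))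
    (f f' : ℝ → ℝ)
    (hcont : ContinuousOn f (Set.Icc 0 1))
    (hint : IntervalIntegrable f' volume 0 1)
    (hint2 : IntervalIntegrable (fun x => (f' x) ^ 2) volume 0 1)
    (hrep : ∀ x ∈ Set.Icc (0 : ℝ) 1, f x = f 0 + ∫ t in (0 : ℝ)..x, f' t)
    (hLip : ∀ x ∈ Set.Icc (0 : ℝ) 1, ∀ y ∈ Set.Icc (0 : ℝ) 1,
      |f x - f y| ≤ L * |x - y|)
    (hbnd : ∀ x ∈ Set.Icc (0 : ℝ) 1, |f x| ≤ 4 * α * L * (k + 1) / B) :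
    (1 / 2) * ((f 0) ^ 2 + (f 1) ^ 2) +
        (1 / (2 * β)) * ∫ x in (0 : ℝ)..1, ((f' x) ^ 2 + β ^ 2 * (f x) ^ 2)
      ≤ ((4 * α * (k + 1) / B) ^ 2 + 4 * α * (k + 1) / B) * L ^ 2 := by
  have hk1 : (0:ℝ) < 4 * α * (k + 1) := by positivity
  have hβ0 : 0 < β := by rw [hβ]; positivity
  set M : ℝ := 4 * α * L * (k + 1) / B with hM
  have hM0 : 0 ≤ M := by positivity
  -- integrability facts
  have hIoc : IntegrableOn f' (Set.Ioc (0:ℝ) 1) :=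
    (intervalIntegrable_iff_integrableOn_Ioc_of_le (by norm_num)).mp hint
  have hIcc : IntegrableOn f' (Set.Icc (0:ℝ) 1) :=
    Iff.mpr integrableOn_Icc_iff_integrableOn_Ioc hIoc
  set g : ℝ → ℝ := (Set.Icc (0:ℝ) 1).indicator f' with hg
  have hgInt : Integrable g := by
    rw [hg, integrable_indicator_iff measurableSet_Icc]; exact hIcc
  have hgLoc : LocallyIntegrable g := hgInt.locallyIntegrable
  -- integral of f' over a subinterval equals f b - f a
  have hsub : ∀ a b : ℝ, a ∈ Set.Icc (0:ℝ) 1 → b ∈ Set.Icc (0:ℝ) 1 →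
      (∫ t in a..b, f' t) = f b - f a := by
    intro a b ha hb
    have h1 : IntervalIntegrable f' volume 0 a :=
      hint.mono_set (by
        rw [Set.uIcc_of_le ha.1, Set.uIcc_of_le (show (0:ℝ) ≤ 1 by norm_num)]
        exact Set.Icc_subset_Icc le_rfl ha.2)
    have h2 : IntervalIntegrable f' volume a b :=
      hint.mono_set (by
        rw [Set.uIcc_of_le (show (0:ℝ) ≤ 1 by norm_num)]
        intro x hx
        rcases Set.mem_uIcc.mp hx with h | h
        · exact ⟨le_trans ha.1 h.1, le_trans h.2 hb.2⟩
        · exact ⟨le_trans hb.1 h.1, le_trans h.2 ha.2⟩)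
    have hadd := intervalIntegral.integral_add_adjacent_intervals h1 h2
    rw [hrep a ha, hrep b hb]
    linarith [hadd]
  -- average bound
  have havg : ∀ x : ℝ, ∀ r : ℝ, 0 < r →
      |⨍ y in Metric.closedBall x r, g y| ≤ L := by
    intro x r hr
    rw [setAverage_eq]
    have hvol : (volume (Metric.closedBall x r)).toReal = 2 * r := by
      rw [Real.volume_closedBall, ENNReal.toReal_ofReal (by linarith)]
    rw [measureReal_def, hvol]
    set a : ℝ := max (x - r) 0 with ha
    set b : ℝ := min (x + r) 1 with hb
    have hset : ∫ y in Metric.closedBall x r, g y = ∫ y in Set.Icc a b, f' y := by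
      rw [hg, setIntegral_indicator measurableSet_Icc, Real.closedBall_eq_Icc,
        Set.Icc_inter_Icc]
    rw [hset]
    by_cases hab : a ≤ b
    · have haI : a ∈ Set.Icc (0:ℝ) 1 := ⟨le_max_right _ _, le_trans hab (min_le_right _ _)⟩
      have hbI : b ∈ Set.Icc (0:ℝ) 1 := ⟨le_trans (le_max_right _ _) hab, min_le_right _ _⟩
      have : ∫ y in Set.Icc a b, f' y = ∫ t in a..b, f' t := by
        rw [intervalIntegral.integral_of_le hab, integral_Icc_eq_integral_Ioc]
      rw [this, hsub a b haI hbI]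
      have hba : b - a ≤ 2 * r := by
        have := le_max_left (x - r) 0
        have := min_le_left (x + r) 1
        simp only [ha, hb] at *
        have h1 : b ≤ x + r := min_le_left _ _
        have h2 : x - r ≤ a := le_max_left _ _
        linarith
      have hlip := hLip b hbI a haI
      rw [abs_of_nonneg (by linarith : (0:ℝ) ≤ b - a)] at hlip
      rw [smul_eq_mul, abs_mul]
      have h2r : (0:ℝ) < 2 * r := by linarith
      calc |(2*r)⁻¹| * |f b - f a| ≤ (2*r)⁻¹ * (L * (b - a)) := by
            rw [abs_of_nonneg (by positivity)]
            exact mul_le_mul_of_nonneg_left hlip (by positivity)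
        _ ≤ (2*r)⁻¹ * (L * (2*r)) := by
            apply mul_le_mul_of_nonneg_left _ (by positivity)
            exact mul_le_mul_of_nonneg_left hba hL
        _ = L := by field_simp
    · rw [Set.Icc_eq_empty hab]
      simp [hL]
  -- a.e. bound |g x| ≤ L
  have hgae : ∀ᵐ x, |g x| ≤ L := by
    have := IsUnifLocDoublingMeasure.ae_tendsto_average (μ := volume) hgLoc 1
    filter_upwards [this] with x hx
    have htends := hx (fun r : ℝ => x) (fun r : ℝ => r) Filter.tendsto_id
      (by
        filter_upwards [self_mem_nhdsWithin] with r (hr : r ∈ Set.Ioi (0:ℝ))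
        simp only [one_mul, Metric.mem_closedBall, dist_self]
        exact le_of_lt hr)
    have habs : Filter.Tendsto (fun r : ℝ => |⨍ y in Metric.closedBall x r, g y|)
        (nhdsWithin 0 (Set.Ioi 0)) (nhds |g x|) := htends.abs
    refine le_of_tendsto habs ?_
    filter_upwards [self_mem_nhdsWithin] with r (hr : r ∈ Set.Ioi (0:ℝ))
    exact havg x r hr
  -- ∫ f'^2 ≤ L^2
  have hint3 : ∫ t in (0:ℝ)..1, (f' t) ^ 2 ≤ L ^ 2 := by
    have hLint : IntervalIntegrable (fun _ : ℝ => L ^ 2) volume 0 1 :=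
      intervalIntegrable_const
    have hle : (fun t => (f' t) ^ 2) ≤ᶠ[ae (volume.restrict (Set.Icc (0:ℝ) 1))]
        fun _ => L ^ 2 := by
      have := ae_restrict_of_ae (μ := volume) (s := Set.Icc (0:ℝ) 1) hgae
      filter_upwards [this, ae_restrict_mem measurableSet_Icc] with t ht htmem
      rw [hg, Set.indicator_of_mem htmem] at ht
      have := abs_nonneg (f' t)
      calc (f' t) ^ 2 = |f' t| ^ 2 := (sq_abs _).symm
        _ ≤ L ^ 2 := by nlinarith
    calc ∫ t in (0:ℝ)..1, (f' t) ^ 2 ≤ ∫ t in (0:ℝ)..1, L ^ 2 :=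
          intervalIntegral.integral_mono_ae_restrict (by norm_num) hint2 hLint hle
      _ = L ^ 2 := by simp
  -- f^2 interval integrable and ∫ f^2 ≤ M^2
  have hfc : IntervalIntegrable (fun x => (f x) ^ 2) volume 0 1 := by
    apply ContinuousOn.intervalIntegrable
    rw [Set.uIcc_of_le (by norm_num)]
    exact (hcont.pow 2)
  have hint4 : ∫ t in (0:ℝ)..1, (f t) ^ 2 ≤ M ^ 2 := by
    calc ∫ t in (0:ℝ)..1, (f t) ^ 2 ≤ ∫ t in (0:ℝ)..1, M ^ 2 := by
          apply intervalIntegral.integral_mono_on (by norm_num) hfc intervalIntegrable_const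
          intro t ht
          have := hbnd t ht
          have h0 := abs_nonneg (f t)
          calc (f t) ^ 2 = |f t| ^ 2 := (sq_abs _).symm
            _ ≤ M ^ 2 := by nlinarith
      _ = M ^ 2 := by simp
  -- split the integral
  have hsplit : ∫ x in (0:ℝ)..1, ((f' x) ^ 2 + β ^ 2 * (f x) ^ 2)
      = (∫ x in (0:ℝ)..1, (f' x) ^ 2) + β ^ 2 * ∫ x in (0:ℝ)..1, (f x) ^ 2 := by
    rw [intervalIntegral.integral_add hint2 (hfc.const_mul (β ^ 2)),
      intervalIntegral.integral_const_mul]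
  -- endpoint bounds
  have h0b := hbnd 0 (by norm_num)
  have h1b := hbnd 1 (by norm_num)
  have hf0 : (f 0) ^ 2 ≤ M ^ 2 := by
    have h0 := abs_nonneg (f 0)
    calc (f 0) ^ 2 = |f 0| ^ 2 := (sq_abs _).symm
      _ ≤ M ^ 2 := by nlinarith
  have hf1 : (f 1) ^ 2 ≤ M ^ 2 := by
    have h0 := abs_nonneg (f 1)
    calc (f 1) ^ 2 = |f 1| ^ 2 := (sq_abs _).symm
      _ ≤ M ^ 2 := by nlinarith
  rw [hsplit]
  have hmain : (1/2) * ((f 0)^2 + (f 1)^2) +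
      (1/(2*β)) * ((∫ x in (0:ℝ)..1, (f' x)^2) + β^2 * ∫ x in (0:ℝ)..1, (f x)^2)
      ≤ M^2 + (1/(2*β)) * (L^2 + β^2 * M^2) := by
    have hc : 0 < 1/(2*β) := by positivity
    have hb2 : (0:ℝ) ≤ β ^ 2 := sq_nonneg β
    have : (∫ x in (0:ℝ)..1, (f' x)^2) + β^2 * ∫ x in (0:ℝ)..1, (f x)^2
        ≤ L^2 + β^2 * M^2 := by
      have := mul_le_mul_of_nonneg_left hint4 hb2
      linarith
    have := mul_le_mul_of_nonneg_left this (le_of_lt hc)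
    linarith
  refine le_trans hmain (le_of_eq ?_)
  have hCβ : β * (4 * α * (k+1)) = B := by
    rw [hβ]; field_simp
  have hMe : M = L / β := by
    rw [hM, hβ]; field_simp
  rw [hMe, hβ]
  field_simp
  ring
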